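/- arXiv:2308.09996 — 2 statements merged into one kernel-verified Lean document; each statement's English description precedes it below -/
import Mathlib

section
/- Let G be a finite simple graph having a free (simplicial) vertex, i.e. a non-isolated vertex v whose neighbourhood N_G(v) induces a clique together with v (equivalently, belonging to exactly one maximal clique). Then v(J(G)) ≤ bight(I(G)) − 1, where bight(I(G)) is the maximum cardinality of a minimal vertex cover of G. In particular this holds for every chordal graph with at least one edge. -/
open MvPolynomial CategoryTheory

noncomputable section

/-- A set of vertices is a vertex cover if it meets every edge. -/
def IsVertexCover {V : Type} (G : SimpleGraph V) (C : Set V) : Prop :=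
  ∀ ⦃u v : V⦄, G.Adj u v → u ∈ C ∨ v ∈ C

/-- A vertex cover minimal with respect to inclusion. -/
def IsMinimalVertexCover {V : Type} (G : SimpleGraph V) (C : Set V) : Prop :=
  IsVertexCover G C ∧ ∀ C' ⊆ C, IsVertexCover G C' → C' = C

/-- `α₀(G)`: the minimum cardinality of a vertex cover of `G`. -/
def coverNumber {V : Type} (G : SimpleGraph V) : ℕ :=
  sInf {k | ∃ C : Set V, IsVertexCover G C ∧ C.ncard = k}

/-- `bight(I(G))`: the maximum cardinality of a minimal vertex cover of `G`. -/
def bigHeight {V : Type} (G : SimpleGraph V) : ℕ :=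
  sSup {k | ∃ C : Set V, IsMinimalVertexCover G C ∧ C.ncard = k}

/-- The edge ideal `I(G) ⊆ K[x_v : v ∈ V]`, generated by the monomials
`x_u * x_v` over the edges `{u,v}` of `G`. -/
def edgeIdeal (K : Type) [Field K] {V : Type} (G : SimpleGraph V) :
    Ideal (MvPolynomial V K) :=
  Ideal.span {m | ∃ u v : V, G.Adj u v ∧ m = X u * X v}

/-- The cover ideal `J(G) = ⋂_{{u,v} ∈ E(G)} ⟨x_u, x_v⟩`. -/
def coverIdeal (K : Type) [Field K] {V : Type} (G : SimpleGraph V) :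
    Ideal (MvPolynomial V K) :=
  ⨅ (u : V) (v : V) (_ : G.Adj u v), Ideal.span {X u, X v}

/-- The v-number of a graded ideal `I`: the least `d ≥ 0` such that there is a
homogeneous polynomial `f` of degree `d` with `I : f` a prime ideal. -/
def vNumber {K : Type} [Field K] {V : Type} (I : Ideal (MvPolynomial V K)) : ℕ :=
  sInf {d | ∃ f : MvPolynomial V K, f.IsHomogeneous d ∧
    (I.colon (Ideal.span {f})).IsPrime}

/-- The homogeneous maximal ideal `⟨x_1, …, x_n⟩` of the polynomial ring. -/
def maxIdeal (K : Type) [Field K] (V : Type) : Ideal (MvPolynomial V K) :=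
  Ideal.span (Set.range (X : V → MvPolynomial V K))

/-- The depth of the module `M` with respect to the ideal `J`: the supremum of
the lengths of regular sequences on `M` consisting of elements of `J`. -/
def mdepth {R : Type} [CommRing R] (J : Ideal R) (M : Type) [AddCommGroup M]
    [Module R M] : ℕ :=
  sSup {k | ∃ rs : List R, rs.length = k ∧ (∀ r ∈ rs, r ∈ J) ∧
    RingTheory.Sequence.IsRegular M rs}

/-- The projective dimension of an `R`-module `M`, characterized by the
vanishing of `Ext^i(M, N)` for all `i > d` and all modules `N`. -/
def projDim (R : Type) [CommRing R] (M : ModuleCat.{0} R) : ℕ :=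
  sInf {d : ℕ | ∀ (N : ModuleCat.{0} R) (i : ℕ), d < i →
    Subsingleton (((Ext R (ModuleCat.{0} R) i).obj (Opposite.op M)).obj N)}

/-! ### Auxiliary lemmas -/

/-- Substitution killing the two variables `a`, `b`. -/
def killTwo (K : Type) [Field K] {n : ℕ} (a b : Fin n) :
    MvPolynomial (Fin n) K →ₐ[K] MvPolynomial (Fin n) K :=
  aeval (fun w => if w = a ∨ w = b then 0 else X w)

lemma span_pair_eq_ker {K : Type} [Field K] {n : ℕ} (a b : Fin n) :
    Ideal.span {(X a : MvPolynomial (Fin n) K), X b}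
      = RingHom.ker (killTwo K a b).toRingHom := by
  apply le_antisymm
  · rw [Ideal.span_le]
    rintro m (rfl | rfl) <;> simp [RingHom.mem_ker, killTwo]
  · intro p hp
    have hq : (Ideal.Quotient.mk (Ideal.span {(X a : MvPolynomial (Fin n) K), X b})).comp
        (killTwo K a b).toRingHom = Ideal.Quotient.mk _ := by
      apply MvPolynomial.ringHom_ext
      · intro k
        simp [killTwo]
      · intro w
        simp only [RingHom.comp_apply, AlgHom.toRingHom_eq_coe, RingHom.coe_coe, killTwo, aeval_X]
        split_ifs with h
        · rcases h with rfl | rfl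
          · rw [map_zero]
            exact (Ideal.Quotient.eq_zero_iff_mem.mpr (Ideal.subset_span (by simp))).symm
          · rw [map_zero]
            exact (Ideal.Quotient.eq_zero_iff_mem.mpr (Ideal.subset_span (by simp))).symm
        · rfl
    have h2 := RingHom.congr_fun hq p
    rw [RingHom.mem_ker] at hp
    simp only [RingHom.comp_apply] at h2
    rw [hp, map_zero] at h2
    exact Ideal.Quotient.eq_zero_iff_mem.mp h2.symm

lemma isPrime_span_pair {K : Type} [Field K] {n : ℕ} (a b : Fin n) :
    (Ideal.span {(X a : MvPolynomial (Fin n) K), X b}).IsPrime := by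
  rw [span_pair_eq_ker]
  exact RingHom.ker_isPrime _

lemma mem_span_pair_iff {K : Type} [Field K] {n : ℕ} (a b : Fin n)
    (p : MvPolynomial (Fin n) K) :
    p ∈ Ideal.span {(X a : MvPolynomial (Fin n) K), X b} ↔ killTwo K a b p = 0 := by
  rw [span_pair_eq_ker]; rfl

/-- A maximal independent set avoiding the closed neighbourhood of `u0`. -/
lemma exists_maximal_indep {n : ℕ} (G : SimpleGraph (Fin n)) (u0 : Fin n) :
    ∃ A : Finset (Fin n),
      (∀ x ∈ A, ¬ G.Adj u0 x ∧ x ≠ u0) ∧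
      (∀ x ∈ A, ∀ y ∈ A, ¬ G.Adj x y) ∧
      (∀ z, ¬ G.Adj u0 z → z ≠ u0 → z ∉ A → ∃ y ∈ A, G.Adj z y) := by
  classical
  set P : Finset (Fin n) → Prop := fun A =>
    (∀ x ∈ A, ¬ G.Adj u0 x ∧ x ≠ u0) ∧ (∀ x ∈ A, ∀ y ∈ A, ¬ G.Adj x y) with hP
  set F : Finset (Finset (Fin n)) := Finset.univ.filter P with hF
  have hne : F.Nonempty := ⟨∅, by simp [hF, hP]⟩
  obtain ⟨A, hAF, hAmax⟩ := F.exists_max_image Finset.card hne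
  rw [hF, Finset.mem_filter] at hAF
  obtain ⟨-, hA1, hA2⟩ := hAF
  refine ⟨A, hA1, hA2, ?_⟩
  intro z hz1 hz2 hz3
  by_contra hcon
  push_neg at hcon
  have hins : P (insert z A) := by
    constructor
    · intro x hx
      rcases Finset.mem_insert.mp hx with rfl | hx
      · exact ⟨hz1, hz2⟩
      · exact hA1 x hx
    · intro x hx y hy
      rcases Finset.mem_insert.mp hx with hx' | hx' <;>
        rcases Finset.mem_insert.mp hy with hy' | hy'
      · subst hx'; subst hy'; simp
      · subst hx'; exact hcon y hy'
      · subst hy'; intro h; exact hcon x hx' h.symm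
      · exact hA2 x hx' y hy'
  have hmem : insert z A ∈ F := by rw [hF, Finset.mem_filter]; exact ⟨Finset.mem_univ _, hins⟩
  have := hAmax _ hmem
  rw [Finset.card_insert_of_notMem hz3] at this
  omega

/-- If `G` has a free (simplicial) vertex, that is a non-isolated vertex `v`
such that `N_G[v]` is a clique, then `v(J(G)) ≤ bight(I(G)) - 1`. -/
theorem vNumber_coverIdeal_le_bigHeight_sub_one_of_free_vertex
    {K : Type} [Field K] {n : ℕ} (hn : 1 ≤ n) (G : SimpleGraph (Fin n))
    (v : Fin n) (hv : (G.neighborSet v).Nonempty)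
    (hclique : G.IsClique (insert v (G.neighborSet v))) :
    vNumber (coverIdeal K G) ≤ bigHeight G - 1 := by
  classical
  obtain ⟨u0, hadj0⟩ := hv
  have hadj : G.Adj v u0 := hadj0
  have hvne : v ≠ u0 := hadj.ne
  obtain ⟨A, hA1, hA2, hA3⟩ := exists_maximal_indep G u0
  set Cfin : Finset (Fin n) := (insert u0 A)ᶜ with hCfin
  have hvC : v ∈ Cfin := by
    rw [hCfin, Finset.mem_compl, Finset.mem_insert]
    push_neg
    exact ⟨hvne, fun hvA => (hA1 v hvA).1 hadj.symm⟩
  have hu0C : u0 ∉ Cfin := by simp [hCfin]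
  set Dfin : Finset (Fin n) := Cfin.erase v with hDfin
  have hDmem : ∀ x, x ∉ Dfin ↔ (x = v ∨ x = u0 ∨ x ∈ A) := by
    intro x
    rw [hDfin, Finset.mem_erase, hCfin, Finset.mem_compl, Finset.mem_insert]
    push_neg
    tauto
  set f : MvPolynomial (Fin n) K := ∏ w ∈ Dfin, X w with hf
  have hfnot : f ∉ Ideal.span {(X v : MvPolynomial (Fin n) K), X u0} := by
    rw [mem_span_pair_iff, hf, map_prod]
    have hcong : ∀ w ∈ Dfin, (killTwo K v u0) (X w) = X w := by
      intro w hw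
      have h1 : w ≠ v := (Finset.mem_erase.mp hw).1
      have h2 : w ≠ u0 := by
        intro h; subst h; exact hu0C (Finset.mem_erase.mp hw).2
      simp [killTwo, h1, h2]
    rw [Finset.prod_congr rfl hcong]
    exact Finset.prod_ne_zero_iff.mpr (fun w _ => X_ne_zero w)
  have hfmem : ∀ a b : Fin n, a ∈ Dfin →
      f ∈ Ideal.span {(X a : MvPolynomial (Fin n) K), X b} := by
    intro a b ha
    obtain ⟨c, hc⟩ := Finset.dvd_prod_of_mem (fun w => (X w : MvPolynomial (Fin n) K)) ha
    rw [hf, hc]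
    exact Ideal.mul_mem_right _ _ (Ideal.subset_span (by simp))
  have hcomb : ∀ a b : Fin n, G.Adj a b → a ∉ Dfin → b ∉ Dfin →
      ({(X a : MvPolynomial (Fin n) K), X b} : Set (MvPolynomial (Fin n) K))
        = {X v, X u0} := by
    intro a b hab ha hb
    rw [hDmem] at ha hb
    have hu0mem : u0 ∈ insert v (G.neighborSet v) := Set.mem_insert_iff.mpr (Or.inr hadj)
    have key : (a = v ∧ b = u0) ∨ (a = u0 ∧ b = v) := by
      rcases ha with h1 | h1 | h1 <;> rcases hb with h2 | h2 | h2
      · rw [h1, h2] at hab; exact absurd hab (G.loopless.irrefl v)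
      · exact Or.inl ⟨h1, h2⟩
      · rw [h1] at hab
        have hbmem : b ∈ insert v (G.neighborSet v) := Set.mem_insert_iff.mpr (Or.inr hab)
        exact absurd (hclique hu0mem hbmem ((hA1 b h2).2.symm)) (hA1 b h2).1
      · exact Or.inr ⟨h1, h2⟩
      · rw [h1, h2] at hab; exact absurd hab (G.loopless.irrefl u0)
      · rw [h1] at hab; exact absurd hab (hA1 b h2).1
      · rw [h2] at hab
        have hamem : a ∈ insert v (G.neighborSet v) := Set.mem_insert_iff.mpr (Or.inr hab.symm)
        exact absurd (hclique hu0mem hamem ((hA1 a h1).2.symm)) (hA1 a h1).1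
      · rw [h2] at hab; exact absurd hab.symm (hA1 a h1).1
      · exact absurd hab (hA2 a h1 b h2)
    rcases key with ⟨rfl, rfl⟩ | ⟨rfl, rfl⟩
    · rfl
    · exact Set.pair_comm _ _
  have hkey : (coverIdeal K G).colon (Ideal.span {f})
      = Ideal.span {(X v : MvPolynomial (Fin n) K), X u0} := by
    ext r
    rw [Ideal.mem_colon_span_singleton]
    simp only [coverIdeal, Ideal.mem_iInf]
    constructor
    · intro h
      have h1 := h v u0 hadj
      rcases (isPrime_span_pair v u0).mem_or_mem h1 with h2 | h2
      · exact h2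
      · exact absurd h2 hfnot
    · intro hr a b hab
      by_cases hD : a ∈ Dfin ∨ b ∈ Dfin
      · rcases hD with hD | hD
        · exact Ideal.mul_mem_left _ _ (hfmem a b hD)
        · have hmem : f ∈ Ideal.span {(X a : MvPolynomial (Fin n) K), X b} := by
            rw [Set.pair_comm]; exact hfmem b a hD
          exact Ideal.mul_mem_left _ _ hmem
      · push_neg at hD
        rw [hcomb a b hab hD.1 hD.2]
        exact Ideal.mul_mem_right _ _ hr
  have h1 : vNumber (coverIdeal K G) ≤ Dfin.card := by
    apply Nat.sInf_le
    refine ⟨f, ?_, ?_⟩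
    · rw [hf]
      have hp := MvPolynomial.IsHomogeneous.prod Dfin (fun w => (X w : MvPolynomial (Fin n) K))
        (fun _ => 1) (fun w _ => isHomogeneous_X K w)
      simpa using hp
    · rw [hkey]; exact isPrime_span_pair v u0
  have hCmem : ∀ x : Fin n, x ∈ (↑Cfin : Set (Fin n)) ↔ (x ≠ u0 ∧ x ∉ A) := by
    intro x
    rw [hCfin]
    simp only [Finset.coe_compl, Set.mem_compl_iff, Finset.mem_coe, Finset.mem_insert]
    push_neg
    rfl
  have hcover : IsMinimalVertexCover G (↑Cfin : Set (Fin n)) := by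
    constructor
    · intro a b hab
      by_contra hcon
      push_neg at hcon
      obtain ⟨ha, hb⟩ := hcon
      have ha' : a = u0 ∨ a ∈ A := by
        rw [hCmem] at ha; tauto
      have hb' : b = u0 ∨ b ∈ A := by
        rw [hCmem] at hb; tauto
      rcases ha' with h1 | h1 <;> rcases hb' with h2 | h2
      · rw [h1, h2] at hab; exact absurd hab (G.loopless.irrefl u0)
      · rw [h1] at hab; exact absurd hab (hA1 b h2).1
      · rw [h2] at hab; exact absurd hab.symm (hA1 a h1).1
      · exact absurd hab (hA2 a h1 b h2)
    · intro C' hsub hC'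
      apply Set.Subset.antisymm hsub
      intro z hz
      by_contra hzC'
      have hz' : z ≠ u0 ∧ z ∉ A := (hCmem z).mp hz
      by_cases hadjz : G.Adj u0 z
      · rcases hC' hadjz with h | h
        · exact ((hCmem u0).mp (hsub h)).1 rfl
        · exact hzC' h
      · obtain ⟨y, hyA, hyz⟩ := hA3 z hadjz hz'.1 hz'.2
        rcases hC' hyz with h | h
        · exact hzC' h
        · exact ((hCmem y).mp (hsub h)).2 hyA
  have h2 : Cfin.card ≤ bigHeight G := by
    apply le_csSup
    · refine ⟨n, ?_⟩
      rintro k ⟨C', _, rfl⟩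
      calc C'.ncard ≤ (Set.univ : Set (Fin n)).ncard :=
            Set.ncard_le_ncard (Set.subset_univ _) Set.finite_univ
        _ = n := by simp [Set.ncard_univ]
    · exact ⟨↑Cfin, hcover, by simp [Set.ncard_coe_finset]⟩
  have h3 : Dfin.card + 1 = Cfin.card := by
    rw [hDfin]
    exact Finset.card_erase_add_one hvC
  omega

end
end

section
/- Let G be a finite simple graph, x ∈ V(G) a vertex, and H = G \ N_G[x] the induced subgraph on V(G) \ N_G[x]. If H has at least one edge, then v(J(G)) ≤ |N_G(x)| + v(J(H)). -/
open MvPolynomial CategoryTheory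

noncomputable section

namespace VNumAux

variable {K : Type} [Field K] {σ : Type}

open Classical in
noncomputable def kill (K : Type) [Field K] {σ : Type} (u v : σ) :
    MvPolynomial σ K →ₐ[K] MvPolynomial σ K :=
  aeval (fun i => if i = u ∨ i = v then 0 else X i)

open Classical in
lemma kill_X_of_eq (u v i : σ) (h : i = u ∨ i = v) : kill K u v (X i) = 0 := by
  rw [kill, aeval_X, if_pos h]

open Classical in
lemma kill_X (u v i : σ) (hu : i ≠ u) (hv : i ≠ v) : kill K u v (X i) = X i := by
  rw [kill, aeval_X, if_neg (by tauto)]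

lemma span_pair_eq_ker (u v : σ) :
    Ideal.span {(X u : MvPolynomial σ K), X v} = RingHom.ker (kill K u v).toRingHom := by
  apply le_antisymm
  · rw [Ideal.span_le]
    rintro p hp
    rcases hp with rfl | rfl
    · exact kill_X_of_eq u v u (Or.inl rfl)
    · exact kill_X_of_eq u v v (Or.inr rfl)
  · intro p hp
    have key : ∀ q : MvPolynomial σ K, q - kill K u v q ∈ Ideal.span {X u, X v} := by
      intro q
      induction q using MvPolynomial.induction_on with
      | C a => simp [kill]
      | add p q hp hq =>
          have h := Ideal.add_mem _ hp hq
          convert h using 1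
          rw [map_add]; ring
      | mul_X p i hp =>
          by_cases h : i = u ∨ i = v
          · have hX : (X i : MvPolynomial σ K) ∈ Ideal.span {X u, X v} := by
              rcases h with rfl | rfl
              · exact Ideal.subset_span (by simp)
              · exact Ideal.subset_span (by simp)
            rw [map_mul, kill_X_of_eq u v i h, mul_zero, sub_zero]
            exact Ideal.mul_mem_left _ _ hX
          · push_neg at h
            rw [map_mul, kill_X u v i h.1 h.2]
            have heq : p * X i - kill K u v p * X i = (p - kill K u v p) * X i := by ring
            rw [heq]
            exact Ideal.mul_mem_right _ _ hp
    have hk : kill K u v p = 0 := hp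
    have := key p
    rwa [hk, sub_zero] at this

lemma mem_span_pair_iff (u v : σ) (p : MvPolynomial σ K) :
    p ∈ Ideal.span {X u, X v} ↔ kill K u v p = 0 := by
  rw [span_pair_eq_ker]; rfl

lemma isPrime_span_pair (u v : σ) :
    (Ideal.span {(X u : MvPolynomial σ K), X v}).IsPrime := by
  rw [span_pair_eq_ker]; exact RingHom.ker_isPrime _

lemma mul_mem_span_pair_iff (u v : σ) {g p : MvPolynomial σ K} (hg : kill K u v g ≠ 0) :
    p * g ∈ Ideal.span {X u, X v} ↔ p ∈ Ideal.span {X u, X v} := by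
  rw [mem_span_pair_iff, mem_span_pair_iff, map_mul, mul_eq_zero]
  exact or_iff_left hg

lemma kill_prod_X (u v : σ) (s : Finset σ) (hu : u ∉ s) (hv : v ∉ s) :
    kill K u v (∏ y ∈ s, X y) = ∏ y ∈ s, X y := by
  rw [map_prod]
  exact Finset.prod_congr rfl fun y hy =>
    kill_X u v y (fun h => hu (h ▸ hy)) (fun h => hv (h ▸ hy))

lemma prod_X_ne_zero (s : Finset σ) : (∏ y ∈ s, X y : MvPolynomial σ K) ≠ 0 :=
  Finset.prod_ne_zero_iff.mpr fun y _ => X_ne_zero (R := K) y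

lemma X_mem_span_pair_dvd {u v : σ} {g : MvPolynomial σ K} {w : σ}
    (hw : w = u ∨ w = v) (hdvd : X w ∣ g) : g ∈ Ideal.span {X u, X v} := by
  obtain ⟨t, rfl⟩ := hdvd
  have : (X w : MvPolynomial σ K) ∈ Ideal.span {X u, X v} := by
    rcases hw with rfl | rfl
    · exact Ideal.subset_span (by simp)
    · exact Ideal.subset_span (by simp)
  exact Ideal.mul_mem_right _ _ this

end VNumAux


/-- If `H = G \ N_G[x]` has at least one edge, then
`v(J(G)) ≤ |N_G(x)| + v(J(H))`. -/
theorem vNumber_coverIdeal_le_ncard_neighborSet_add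
    {K : Type} [Field K] {V : Type} [Fintype V] (G : SimpleGraph V) (x : V)
    (hH : (G.induce ((insert x (G.neighborSet x))ᶜ : Set V)).edgeSet.Nonempty) :
    vNumber (coverIdeal K G) ≤ (G.neighborSet x).ncard +
      vNumber (coverIdeal K
        (G.induce ((insert x (G.neighborSet x))ᶜ : Set V))) := by
  classical
  open VNumAux in
  set S : Set V := (insert x (G.neighborSet x))ᶜ with hSdef
  haveI : Fintype ↥S := Fintype.ofFinite _
  haveI : Fintype ↥(Sᶜ) := Fintype.ofFinite _
  obtain ⟨e, he⟩ := hH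
  induction e using Sym2.ind with
  | _ a b =>
  rw [SimpleGraph.mem_edgeSet] at he
  have hadj : G.Adj ↑a ↑b := he
  -- Step A : the witness set for H is nonempty
  set g₀ : MvPolynomial ↥S K := ∏ y ∈ (Finset.univ \ {a, b}), X y with hg₀def
  have ha0 : a ∉ Finset.univ \ ({a, b} : Finset ↥S) := by simp
  have hb0 : b ∉ Finset.univ \ ({a, b} : Finset ↥S) := by simp
  have hcolon₀ : (coverIdeal K (G.induce S)).colon (Ideal.span {g₀}) =
      Ideal.span {X a, X b} := by
    ext p
    rw [Ideal.mem_colon_span_singleton]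
    simp only [coverIdeal, Ideal.mem_iInf]
    constructor
    · intro h
      have h2 := h a b he
      exact (mul_mem_span_pair_iff a b
        (by rw [hg₀def, kill_prod_X a b _ ha0 hb0]; exact prod_X_ne_zero _)).mp h2
    · intro hp u v huv
      by_cases hw : (u = a ∨ u = b) ∧ (v = a ∨ v = b)
      · have hne : u ≠ v := huv.ne
        rcases hw.1 with rfl | rfl <;> rcases hw.2 with rfl | rfl
        · exact absurd rfl hne
        · exact Ideal.mul_mem_right _ _ hp
        · rw [Set.pair_comm (X u) (X v)]
          exact Ideal.mul_mem_right _ _ hp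
        · exact absurd rfl hne
      · rw [not_and_or] at hw
        have hex : ∃ w : ↥S, (w = u ∨ w = v) ∧ w ≠ a ∧ w ≠ b := by
          rcases hw with hw | hw
          · push_neg at hw; exact ⟨u, Or.inl rfl, hw⟩
          · push_neg at hw; exact ⟨v, Or.inr rfl, hw⟩
        obtain ⟨w, hwuv, hwa, hwb⟩ := hex
        have hdvd : X w ∣ g₀ :=
          Finset.dvd_prod_of_mem _ (by simp [hwa, hwb])
        exact Ideal.mul_mem_left _ _ (X_mem_span_pair_dvd hwuv hdvd)
  have hne₀ : {d | ∃ f : MvPolynomial ↥S K, f.IsHomogeneous d ∧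
      ((coverIdeal K (G.induce S)).colon (Ideal.span {f})).IsPrime}.Nonempty := by
    refine ⟨∑ _y ∈ (Finset.univ \ ({a, b} : Finset ↥S)), 1, g₀, ?_, ?_⟩
    · exact IsHomogeneous.prod _ _ _ (fun i _ => isHomogeneous_X K i)
    · rw [hcolon₀]; exact isPrime_span_pair a b
  obtain ⟨g', hg'hom, hg'prime⟩ := Nat.sInf_mem hne₀
  -- Step B : the isomorphism Φ
  set e : ↥(Sᶜ) ⊕ ↥S ≃ V :=
    (Equiv.sumComm ↥(Sᶜ) ↥S).trans (Equiv.Set.sumCompl S) with hedef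
  set Φ : MvPolynomial V K ≃ₐ[K] MvPolynomial ↥(Sᶜ) (MvPolynomial ↥S K) :=
    (renameEquiv K e.symm).trans (sumAlgEquiv K ↥(Sᶜ) ↥S) with hΦdef
  have hΦX_mem : ∀ (v : V) (hv : v ∈ S), Φ (X v) = C (X ⟨v, hv⟩) := by
    intro v hv
    have h1 : e.symm v = Sum.inr ⟨v, hv⟩ := by
      simp [hedef, Equiv.symm_trans_apply, Equiv.Set.sumCompl_symm_apply_of_mem hv]
    simp only [hΦdef, AlgEquiv.trans_apply, renameEquiv_apply, rename_X, h1,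
      sumAlgEquiv_X_inr]
  have hΦrename : ∀ g : MvPolynomial ↥S K,
      Φ (rename (Subtype.val : ↥S → V) g) = C g := by
    intro g
    induction g using MvPolynomial.induction_on with
    | C r =>
        rw [rename_C, show (C r : MvPolynomial V K) = algebraMap K _ r from rfl,
          AlgEquiv.commutes]
        rfl
    | add p q hp hq => rw [map_add, map_add, hp, hq, map_add]
    | mul_X p i hp =>
        rw [map_mul, map_mul, hp, rename_X, hΦX_mem ↑i i.2, map_mul]
  set Q : Ideal (MvPolynomial ↥S K) :=
    (coverIdeal K (G.induce S)).colon (Ideal.span {g'}) with hQdef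
  have hmapCQ : (Ideal.map
      (C : MvPolynomial ↥S K →+* MvPolynomial ↥(Sᶜ) (MvPolynomial ↥S K)) Q).IsPrime := by
    rw [← Ideal.Quotient.isDomain_iff_prime]
    haveI : IsDomain (MvPolynomial ↥S K ⧸ Q) :=
      (Ideal.Quotient.isDomain_iff_prime Q).mpr hg'prime
    exact MulEquiv.isDomain (MvPolynomial ↥(Sᶜ) (MvPolynomial ↥S K ⧸ Q))
      (quotientEquivQuotientMvPolynomial (σ := ↥(Sᶜ)) Q).symm.toMulEquiv
  -- the products
  set m : MvPolynomial V K := ∏ y ∈ G.neighborFinset x, X y with hmdef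
  set f : MvPolynomial V K := m * rename (Subtype.val : ↥S → V) g' with hfdef
  have hSnotNbr : ∀ u : V, u ∈ S → u ∉ G.neighborFinset x := by
    intro u hu hmem
    rw [SimpleGraph.mem_neighborFinset] at hmem
    exact hu (Set.mem_insert_iff.mpr (Or.inr hmem))
  have hkillm : ∀ u v : ↥S, kill K (↑u : V) ↑v m = m := by
    intro u v
    exact kill_prod_X _ _ _ (hSnotNbr ↑u u.2) (hSnotNbr ↑v v.2)
  -- transfer lemma, per edge of H
  set Φr : MvPolynomial V K ≃+* MvPolynomial ↥(Sᶜ) (MvPolynomial ↥S K) :=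
    Φ.toRingEquiv with hΦrdef
  have hΦr : ∀ z : MvPolynomial V K, Φr z = Φ z := fun _ => rfl
  have htrans : ∀ (p : MvPolynomial V K) (u v : ↥S),
      p * rename (Subtype.val : ↥S → V) g' ∈ Ideal.span {X (↑u : V), X ↑v} ↔
      ∀ μ, coeff μ (Φ p) * g' ∈ Ideal.span {(X u : MvPolynomial ↥S K), X v} := by
    intro p u v
    have hiso : ∀ (z : MvPolynomial V K) (I : Ideal (MvPolynomial V K)),
        z ∈ I ↔ Φr z ∈ I.map Φr := by
      intro z I
      rw [← Ideal.comap_symm, Ideal.mem_comap, RingEquiv.symm_apply_apply]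
    have hmapspan : (Ideal.span {X (↑u : V), X ↑v}).map Φr =
        Ideal.map (C : MvPolynomial ↥S K →+* _)
          (Ideal.span {(X u : MvPolynomial ↥S K), X v}) := by
      rw [show ((Ideal.span {X (↑u : V), X ↑v}).map Φr) =
        (Ideal.span {X (↑u : V), X ↑v}).map (Φr : MvPolynomial V K →+* _) from rfl]
      rw [Ideal.map_span, Ideal.map_span, Set.image_pair, Set.image_pair]
      rw [show ((Φr : MvPolynomial V K →+* _) (X (↑u : V))) = Φ (X (↑u : V)) from rfl,
        show ((Φr : MvPolynomial V K →+* _) (X (↑v : V))) = Φ (X (↑v : V)) from rfl,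
        hΦX_mem ↑u u.2, hΦX_mem ↑v v.2]
    rw [hiso, hmapspan, hΦr, map_mul, hΦrename]
    rw [MvPolynomial.mem_map_C_iff]
    have hcoeff : ∀ μ, coeff μ (Φ p * C g') = coeff μ (Φ p) * g' := by
      intro μ; rw [mul_comm (Φ p) (C g'), coeff_C_mul, mul_comm]
    constructor
    · intro h μ; rw [← hcoeff μ]; exact h μ
    · intro h μ; rw [hcoeff μ]; exact h μ
  -- the key colon computation
  have hkey : (coverIdeal K G).colon (Ideal.span {f}) =
      Ideal.comap Φr (Ideal.map (C : MvPolynomial ↥S K →+* _) Q) := by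
    ext p
    rw [Ideal.mem_colon_span_singleton, Ideal.mem_comap, hΦr, MvPolynomial.mem_map_C_iff]
    simp only [coverIdeal, Ideal.mem_iInf]
    constructor
    · intro h μ
      rw [hQdef, Ideal.mem_colon_span_singleton]
      simp only [coverIdeal, Ideal.mem_iInf]
      intro u v huv
      have hGuv : G.Adj ↑u ↑v := huv
      have h1 := h ↑u ↑v hGuv
      have h2 : (p * rename Subtype.val g') * m ∈ Ideal.span {X (↑u : V), X ↑v} := by
        have heq : p * f = (p * rename Subtype.val g') * m := by rw [hfdef]; ring
        rwa [heq] at h1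
      have h3 : p * rename Subtype.val g' ∈ Ideal.span {X (↑u : V), X ↑v} :=
        (mul_mem_span_pair_iff _ _
          (by rw [hkillm u v, hmdef]; exact prod_X_ne_zero _)).mp h2
      exact (htrans p u v).mp h3 μ
    · intro h u v huv
      have hcases : (∃ y ∈ G.neighborFinset x, y = u ∨ y = v) ∨ (u ∈ S ∧ v ∈ S) := by
        by_cases hu : u ∈ S
        · by_cases hv : v ∈ S
          · exact Or.inr ⟨hu, hv⟩
          · left
            rw [hSdef, Set.notMem_compl_iff] at hv
            rcases Set.mem_insert_iff.mp hv with rfl | hv'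
            · exact ⟨u, by rw [SimpleGraph.mem_neighborFinset]; exact huv.symm, Or.inl rfl⟩
            · exact ⟨v, by rwa [SimpleGraph.mem_neighborFinset], Or.inr rfl⟩
        · left
          rw [hSdef, Set.notMem_compl_iff] at hu
          rcases Set.mem_insert_iff.mp hu with rfl | hu'
          · exact ⟨v, by rw [SimpleGraph.mem_neighborFinset]; exact huv, Or.inr rfl⟩
          · exact ⟨u, by rwa [SimpleGraph.mem_neighborFinset], Or.inl rfl⟩
      rcases hcases with ⟨y, hy, hyuv⟩ | ⟨hu, hv⟩
      · have hdvd : X y ∣ f := by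
          rw [hfdef]
          exact dvd_mul_of_dvd_left (Finset.dvd_prod_of_mem _ hy) _
        exact Ideal.mul_mem_left _ _ (X_mem_span_pair_dvd hyuv hdvd)
      · have hadj' : (G.induce S).Adj ⟨u, hu⟩ ⟨v, hv⟩ := by
          simpa using huv
        have h4 : ∀ μ, coeff μ (Φ p) * g' ∈
            Ideal.span {(X (⟨u, hu⟩ : ↥S) : MvPolynomial ↥S K), X ⟨v, hv⟩} := by
          intro μ
          have h5 := h μ
          rw [hQdef, Ideal.mem_colon_span_singleton] at h5
          simp only [coverIdeal, Ideal.mem_iInf] at h5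
          exact h5 ⟨u, hu⟩ ⟨v, hv⟩ hadj'
        have h5 : p * rename Subtype.val g' ∈ Ideal.span {X u, X v} :=
          (htrans p ⟨u, hu⟩ ⟨v, hv⟩).mpr h4
        have heq : p * f = (p * rename Subtype.val g') * m := by rw [hfdef]; ring
        rw [heq]
        exact Ideal.mul_mem_right _ _ h5
  have hprimeG : ((coverIdeal K G).colon (Ideal.span {f})).IsPrime := by
    rw [hkey]
    exact hmapCQ.comap _
  -- homogeneity and conclusion
  have hmhom : m.IsHomogeneous (G.neighborFinset x).card := by
    have h := IsHomogeneous.prod (G.neighborFinset x) (fun y => (X y : MvPolynomial V K))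
      (fun _ => 1) (fun i _ => isHomogeneous_X K i)
    simpa using h
  have hcard : (G.neighborSet x).ncard = (G.neighborFinset x).card := by
    simp [Set.ncard_eq_toFinset_card', SimpleGraph.neighborFinset_def]
  have hfhom : f.IsHomogeneous ((G.neighborSet x).ncard +
      vNumber (coverIdeal K (G.induce S))) := by
    rw [hcard]
    exact hmhom.mul hg'hom.rename_isHomogeneous
  exact Nat.sInf_le ⟨f, hfhom, hprimeG⟩

end
end
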